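/- arXiv:1712.08780 — 2 statements merged into one kernel-verified Lean document; each statement's English description precedes it below -/
import Mathlib

section
/- Let G be a graph and let E_1,...,E_k be subsets of E(G) with E_1 ∪ ... ∪ E_k = E(G). Let G_1,...,G_k be the isolate-free graphs with edge sets E_1,...,E_k respectively. Then γ_gr^t(G) ≤ γ_gr^t(G_1) + ... + γ_gr^t(G_k). -/
open SimpleGraph

/-- A legal open neighborhood sequence in `G`. -/
def IsOpenLegal {α : Type*} (G : SimpleGraph α) (L : List α) : Prop :=
  L.Nodup ∧ ∀ i : Fin L.length, ∃ w, G.Adj (L.get i) w ∧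
    ∀ j : Fin L.length, j < i → ¬ G.Adj (L.get j) w

/-- The Grundy total domination number of `G`. -/
noncomputable def grundyT {α : Type*} (G : SimpleGraph α) : ℕ :=
  sSup {n | ∃ L : List α, IsOpenLegal G L ∧ L.length = n}

/-- A legal closed neighborhood (dominating) sequence in `G`. -/
def IsClosedLegal {α : Type*} (G : SimpleGraph α) (L : List α) : Prop :=
  L.Nodup ∧ ∀ i : Fin L.length, ∃ w, (G.Adj (L.get i) w ∨ L.get i = w) ∧
    ∀ j : Fin L.length, j < i → ¬ (G.Adj (L.get j) w ∨ L.get j = w)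

/-- The Grundy domination number of `G`. -/
noncomputable def grundyDom {α : Type*} (G : SimpleGraph α) : ℕ :=
  sSup {n | ∃ L : List α, IsClosedLegal G L ∧ L.length = n}

/-- The direct (tensor) product of simple graphs. -/
def directProd {α β : Type*} (G : SimpleGraph α) (H : SimpleGraph β) : SimpleGraph (α × β) where
  Adj x y := G.Adj x.1 y.1 ∧ H.Adj x.2 y.2
  symm := ⟨fun _ _ h => ⟨h.1.symm, h.2.symm⟩⟩
  loopless := ⟨fun x h => G.loopless.irrefl x.1 h.1⟩

/-- The lexicographic product of simple graphs. -/
def lexProd {α β : Type*} (G : SimpleGraph α) (H : SimpleGraph β) : SimpleGraph (α × β) where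
  Adj x y := G.Adj x.1 y.1 ∨ (x.1 = y.1 ∧ H.Adj x.2 y.2)
  symm := by
    refine ⟨?_⟩
    rintro x y (h | ⟨h1, h2⟩)
    · exact Or.inl h.symm
    · exact Or.inr ⟨h1.symm, h2.symm⟩
  loopless := by
    refine ⟨?_⟩
    rintro x (h | ⟨_, h⟩)
    · exact G.loopless.irrefl _ h
    · exact H.loopless.irrefl _ h

/-- The strong product of simple graphs. -/
def strongProd {α β : Type*} (G : SimpleGraph α) (H : SimpleGraph β) : SimpleGraph (α × β) where
  Adj x y := (G.Adj x.1 y.1 ∧ x.2 = y.2) ∨ (x.1 = y.1 ∧ H.Adj x.2 y.2) ∨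
    (G.Adj x.1 y.1 ∧ H.Adj x.2 y.2)
  symm := by
    refine ⟨?_⟩
    rintro x y (⟨h, e⟩ | ⟨e, h⟩ | ⟨h1, h2⟩)
    · exact Or.inl ⟨h.symm, e.symm⟩
    · exact Or.inr (Or.inl ⟨e.symm, h.symm⟩)
    · exact Or.inr (Or.inr ⟨h1.symm, h2.symm⟩)
  loopless := by
    refine ⟨?_⟩
    rintro x (⟨h, _⟩ | ⟨_, h⟩ | ⟨h, _⟩)
    · exact G.loopless.irrefl _ h
    · exact H.loopless.irrefl _ h
    · exact G.loopless.irrefl _ h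

/-- The minimum number of complete bipartite subgraphs of `G` covering all edges of `G`. -/
noncomputable def bc {α : Type*} (G : SimpleGraph α) : ℕ :=
  sInf {k | ∃ A B : Fin k → Set α,
    (∀ i a b, a ∈ A i → b ∈ B i → G.Adj a b) ∧
    (∀ u v, G.Adj u v → ∃ i, (u ∈ A i ∧ v ∈ B i) ∨ (v ∈ A i ∧ u ∈ B i))}

/-- `aD G L` is the number of entries of `L` not adjacent to any earlier entry. -/
noncomputable def aD {α : Type*} (G : SimpleGraph α) (L : List α) : ℕ :=
  {i : Fin L.length | ∀ j : Fin L.length, j < i → ¬ G.Adj (L.get j) (L.get i)}.ncard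

/-- The vertex cover number of `G`. -/
noncomputable def vertexCoverNum {α : Type*} (G : SimpleGraph α) : ℕ :=
  sInf {n | ∃ S : Finset α, S.card = n ∧ ∀ u v, G.Adj u v → u ∈ S ∨ v ∈ S}

/-- The independence number of `G`. -/
noncomputable def indepNum {α : Type*} (G : SimpleGraph α) : ℕ :=
  sSup {n | ∃ S : Finset α, S.card = n ∧ ∀ u ∈ S, ∀ v ∈ S, ¬ G.Adj u v}

lemma length_le_grundyT {α : Type*} [Fintype α] (G : SimpleGraph α) (L : List α)
    (h : IsOpenLegal G L) : L.length ≤ grundyT G := by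
  apply le_csSup
  · refine ⟨Fintype.card α, ?_⟩
    rintro n ⟨M, hM, rfl⟩
    exact hM.1.length_le_card
  · exact ⟨L, h, rfl⟩

theorem grundyT_le_sum_of_edge_cover {α : Type*} [Fintype α] (G : SimpleGraph α)
    (k : ℕ) (Gs : Fin k → SimpleGraph α) (hle : ∀ i, Gs i ≤ G)
    (hcov : ∀ u v, G.Adj u v ↔ ∃ i, (Gs i).Adj u v) :
    grundyT G ≤ ∑ i, grundyT (Gs i) := by
  classical
  apply csSup_le'
  rintro n ⟨L, ⟨hnd, hleg⟩, rfl⟩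
  choose w hw1 hw2 using hleg
  choose c hc using fun i => (hcov (L.get i) (w i)).mp (hw1 i)
  set I : Fin k → List (Fin L.length) :=
    fun t => (List.finRange L.length).filter (fun i => c i = t) with hI
  have hmem : ∀ t i, i ∈ I t → c i = t := by
    intro t i hi
    have := (List.mem_filter.mp hi).2
    simpa using this
  have hnodI : ∀ t, (I t).Nodup := fun t => (List.nodup_finRange _).filter _
  have hsort : ∀ t, (I t).Pairwise (· < ·) :=
    fun t => (List.pairwise_lt_finRange _).sublist List.filter_sublist
  have hinj : Function.Injective L.get := List.nodup_iff_injective_get.mp hnd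
  have hlen : ∑ t, (I t).length = L.length := by
    have h1 : ∀ t, (I t).length = (Finset.univ.filter (fun i => c i = t)).card := by
      intro t
      rw [← List.toFinset_card_of_nodup (hnodI t)]
      congr 1
      ext i
      simp [hI, List.mem_filter]
    calc ∑ t, (I t).length = ∑ t, (Finset.univ.filter (fun i => c i = t)).card := by
          simp [h1]
      _ = (Finset.univ : Finset (Fin L.length)).card :=
          (Finset.card_eq_sum_card_fiberwise (fun i _ => Finset.mem_univ (c i))).symm
      _ = L.length := by simp
  have hlegal : ∀ t, IsOpenLegal (Gs t) ((I t).map L.get) := by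
    intro t
    refine ⟨(hnodI t).map hinj, ?_⟩
    intro p
    have hml : ((I t).map L.get).length = (I t).length := List.length_map _
    set p' : Fin (I t).length := Fin.cast hml p with hp'
    set i := (I t).get p' with hi
    have hget : ∀ q : Fin ((I t).map L.get).length,
        ((I t).map L.get).get q = L.get ((I t).get (Fin.cast hml q)) := by
      intro q
      simp [List.get_eq_getElem]
    have hct : c i = t := hmem t i ((I t).get_mem p')
    refine ⟨w i, ?_, ?_⟩
    · rw [hget p]
      have h := hc i
      rw [hct] at h
      exact h
    · intro q hq hadj
      have hqlt : (I t).get (Fin.cast hml q) < i := by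
        have := List.pairwise_iff_get.mp (hsort t)
        exact this (Fin.cast hml q) p' hq
      rw [hget q] at hadj
      exact hw2 i _ hqlt (hle t hadj)
  calc L.length = ∑ t, (I t).length := hlen.symm
    _ = ∑ t, ((I t).map L.get).length := by simp
    _ ≤ ∑ t, grundyT (Gs t) :=
        Finset.sum_le_sum fun t _ => length_le_grundyT (Gs t) _ (hlegal t)
end

section
/- If v_1 and v_2 are distinct vertices of a graph G with the same open neighborhood N(v_1) = N(v_2), then γ_gr^t(G) = γ_gr^t(G − v_2), where G − v_2 is the graph obtained by deleting v_2. -/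
open SimpleGraph

theorem grundyT_delete_twin {α : Type*} [Fintype α] (G : SimpleGraph α)
    (v₁ v₂ : α) (hne : v₁ ≠ v₂) (hN : G.neighborSet v₁ = G.neighborSet v₂) :
    grundyT G = grundyT (G.induce {v | v ≠ v₂}) := by
  classical
  have hsym : ∀ w, G.Adj v₁ w ↔ G.Adj v₂ w := by
    intro w
    constructor <;> intro h
    · have h' : w ∈ G.neighborSet v₁ := h
      rw [hN] at h'; exact h'
    · have h' : w ∈ G.neighborSet v₂ := h
      rw [← hN] at h'; exact h'
  set f : α → α := fun x => if x = v₂ then v₁ else x with hf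
  have hfne : ∀ x, f x ≠ v₂ := by
    intro x; simp only [hf]; split
    · exact hne
    · assumption
  have hfAdj : ∀ x w, G.Adj (f x) w ↔ G.Adj x w := by
    intro x w; simp only [hf]; split
    · rename_i h; subst h; exact hsym w
    · exact Iff.rfl
  have hfAdj' : ∀ x w, G.Adj x (f w) ↔ G.Adj x w := by
    intro x w; rw [adj_comm, hfAdj, adj_comm]
  unfold grundyT
  congr 1
  ext n
  simp only [Set.mem_setOf_eq]
  constructor
  · rintro ⟨L, ⟨hnd, hleg⟩, rfl⟩
    have hnotboth : ¬ (v₁ ∈ L ∧ v₂ ∈ L) := by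
      rintro ⟨h1, h2⟩
      obtain ⟨i₁, hi₁⟩ := List.mem_iff_get.mp h1
      obtain ⟨i₂, hi₂⟩ := List.mem_iff_get.mp h2
      rcases lt_trichotomy i₁ i₂ with hlt | heq | hlt
      · obtain ⟨w, hw1, hw2⟩ := hleg i₂
        apply hw2 i₁ hlt
        rw [hi₁]; rw [hi₂] at hw1
        exact (hsym w).mpr hw1
      · rw [heq, hi₂] at hi₁; exact hne hi₁.symm
      · obtain ⟨w, hw1, hw2⟩ := hleg i₁
        apply hw2 i₂ hlt
        rw [hi₂]; rw [hi₁] at hw1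
        exact (hsym w).mp hw1
    have hv₁ : v₂ ∈ L → v₁ ∉ L := fun h2 h1 => hnotboth ⟨h1, h2⟩
    set M := L.map f with hM
    have hlenM : M.length = L.length := by simp [hM]
    have hMv₂ : ∀ x ∈ M, x ∈ {v : α | v ≠ v₂} := by
      intro x hx; obtain ⟨y, _, rfl⟩ := List.mem_map.mp hx; exact hfne y
    have hMnd : M.Nodup := by
      apply hnd.map_on
      intro x hx y hy hxy
      by_cases hx2 : x = v₂ <;> by_cases hy2 : y = v₂
      · rw [hx2, hy2]
      · exfalso
        subst hx2
        simp only [hf, if_pos rfl, if_neg hy2] at hxy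
        exact hv₁ hx (hxy ▸ hy)
      · exfalso
        subst hy2
        simp only [hf, if_pos rfl, if_neg hx2] at hxy
        exact hv₁ hy (hxy ▸ hx)
      · simpa only [hf, if_neg hx2, if_neg hy2] using hxy
    refine ⟨M.pmap (fun x h => (⟨x, h⟩ : {v : α | v ≠ v₂})) hMv₂, ⟨?_, ?_⟩, by
      simp [hM]⟩
    · exact hMnd.pmap (fun a _ b _ h => congrArg Subtype.val h)
    · intro i
      have hlen' : (M.pmap (fun x h => (⟨x, h⟩ : {v : α | v ≠ v₂})) hMv₂).length = L.length := by
        simp [hM]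
      have hiL : (i : ℕ) < L.length := hlen' ▸ i.isLt
      obtain ⟨w, hw1, hw2⟩ := hleg ⟨i, hiL⟩
      refine ⟨⟨f w, hfne w⟩, ?_, ?_⟩
      · simp only [comap_adj, List.get_eq_getElem, List.getElem_pmap, Function.Embedding.coe_subtype]
        simp only [hM, List.getElem_map]
        rw [hfAdj, hfAdj']
        simpa using hw1
      · intro j hj
        have hjL : (j : ℕ) < L.length := hlen' ▸ j.isLt
        simp only [comap_adj, List.get_eq_getElem, List.getElem_pmap, Function.Embedding.coe_subtype]
        simp only [hM, List.getElem_map]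
        rw [hfAdj, hfAdj']
        have := hw2 ⟨j, hjL⟩ (by exact_mod_cast hj)
        simpa using this
  · rintro ⟨L, ⟨hnd, hleg⟩, rfl⟩
    refine ⟨L.map Subtype.val, ⟨hnd.map Subtype.val_injective, ?_⟩, by simp⟩
    intro i
    have hiL : (i : ℕ) < L.length := by simpa using i.isLt
    obtain ⟨w, hw1, hw2⟩ := hleg ⟨i, hiL⟩
    refine ⟨w.val, ?_, ?_⟩
    · simp only [List.get_eq_getElem, List.getElem_map]
      simpa [comap_adj] using hw1
    · intro j hj
      have hjL : (j : ℕ) < L.length := by simpa using j.isLt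
      have := hw2 ⟨j, hjL⟩ (by exact_mod_cast hj)
      simp only [List.get_eq_getElem, List.getElem_map]
      simpa [comap_adj] using this
end
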